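/- arXiv:1201.6326 — 2 statements merged into one kernel-verified Lean document; each statement's English description precedes it below -/
import Mathlib

section
/- Let Ω₀, Θ₀ > 0 and C > 0, and let Ω : [0,T] → ℝ≥0 be a continuous function satisfying Ω(t) ≤ (Ω₀ + t·Θ₀·exp(C∫₀ᵗ Ω dτ))·(1 + C∫₀ᵗ Ω dτ) for all t ∈ [0,T]. If T·Θ₀·exp(C∫₀ᵀ Ω dτ) ≤ Ω₀, then Ω(t) ≤ 2Ω₀·e^{2CtΩ₀} for all t ∈ [0,T]. -/
open MeasureTheory intervalIntegral

theorem stmt_2 (T Ω₀ Θ₀ C : ℝ) (hT : 0 < T) (hΩ₀ : 0 < Ω₀) (hΘ₀ : 0 < Θ₀) (hC : 0 < C)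
    (Ω : ℝ → ℝ) (hΩcont : ContinuousOn Ω (Set.Icc 0 T))
    (hΩnn : ∀ t ∈ Set.Icc (0:ℝ) T, 0 ≤ Ω t)
    (hineq : ∀ t ∈ Set.Icc (0:ℝ) T,
      Ω t ≤ (Ω₀ + t * Θ₀ * Real.exp (C * ∫ τ in (0:ℝ)..t, Ω τ))
              * (1 + C * ∫ τ in (0:ℝ)..t, Ω τ))
    (hsmall : T * Θ₀ * Real.exp (C * ∫ τ in (0:ℝ)..T, Ω τ) ≤ Ω₀) :
    ∀ t ∈ Set.Icc (0:ℝ) T, Ω t ≤ 2 * Ω₀ * Real.exp (2 * C * t * Ω₀) := by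
  -- Extend Ω continuously to all of ℝ
  set Ωe : ℝ → ℝ := Set.IccExtend hT.le ((Set.Icc (0:ℝ) T).restrict Ω) with hΩe_def
  have hΩe_cont : Continuous Ωe := hΩcont.restrict.Icc_extend'
  have hΩe_eq : ∀ x ∈ Set.Icc (0:ℝ) T, Ωe x = Ω x := fun x hx => by
    simp [hΩe_def, Set.IccExtend_of_mem hT.le _ hx]; rfl
  have hΩe_nn : ∀ x, 0 ≤ Ωe x := fun x =>
    hΩnn _ (Set.projIcc (0:ℝ) T hT.le x).2
  set F : ℝ → ℝ := fun x => ∫ τ in (0:ℝ)..x, Ωe τ with hF_def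
  have hFderiv : ∀ x : ℝ, HasDerivAt F (Ωe x) x := fun x =>
    (hΩe_cont.integral_hasStrictDerivAt 0 x).hasDerivAt
  have hFcont : Continuous F := continuous_iff_continuousAt.2 fun x => (hFderiv x).continuousAt
  have hint_eq : ∀ x ∈ Set.Icc (0:ℝ) T, F x = ∫ τ in (0:ℝ)..x, Ω τ := fun x hx => by
    refine intervalIntegral.integral_congr fun τ hτ => hΩe_eq τ ?_
    rw [Set.uIcc_of_le hx.1] at hτ
    exact ⟨hτ.1, hτ.2.trans hx.2⟩
  have hFnn : ∀ x, 0 ≤ x → 0 ≤ F x := fun x hx =>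
    intervalIntegral.integral_nonneg hx fun τ _ => hΩe_nn τ
  have hFmono : ∀ x ∈ Set.Icc (0:ℝ) T, F x ≤ F T := by
    intro x hx
    have hadd : F x + ∫ τ in x..T, Ωe τ = F T :=
      intervalIntegral.integral_add_adjacent_intervals
        (hΩe_cont.intervalIntegrable 0 x) (hΩe_cont.intervalIntegrable x T)
    linarith [intervalIntegral.integral_nonneg (μ := volume) hx.2 (fun τ _ => hΩe_nn τ)]
  -- Key pointwise bound
  have hkey : ∀ x ∈ Set.Icc (0:ℝ) T, Ω x ≤ 2 * Ω₀ + (2 * C * Ω₀) * F x := by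
    intro x hx
    have hIx : F x = ∫ τ in (0:ℝ)..x, Ω τ := hint_eq x hx
    have hIT : F T = ∫ τ in (0:ℝ)..T, Ω τ := hint_eq T ⟨hT.le, le_refl T⟩
    have hsm : x * Θ₀ * Real.exp (C * ∫ τ in (0:ℝ)..x, Ω τ) ≤ Ω₀ := by
      refine le_trans ?_ hsmall
      have h1 : Real.exp (C * ∫ τ in (0:ℝ)..x, Ω τ)
          ≤ Real.exp (C * ∫ τ in (0:ℝ)..T, Ω τ) := by
        apply Real.exp_le_exp.2
        have := hFmono x hx
        rw [hIx, hIT] at this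
        nlinarith
      have h2 : (0:ℝ) < Real.exp (C * ∫ τ in (0:ℝ)..x, Ω τ) := Real.exp_pos _
      calc x * Θ₀ * Real.exp (C * ∫ τ in (0:ℝ)..x, Ω τ)
          ≤ T * Θ₀ * Real.exp (C * ∫ τ in (0:ℝ)..x, Ω τ) :=
            mul_le_mul_of_nonneg_right
              (mul_le_mul_of_nonneg_right hx.2 hΘ₀.le) h2.le
        _ ≤ T * Θ₀ * Real.exp (C * ∫ τ in (0:ℝ)..T, Ω τ) :=
            mul_le_mul_of_nonneg_left h1 (by positivity)
    have hFxnn : 0 ≤ F x := hFnn x hx.1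
    have h3 := hineq x hx
    rw [← hIx] at h3 hsm
    have hpos : (0:ℝ) ≤ 1 + C * F x := by positivity
    have hsnn : 0 ≤ x * Θ₀ * Real.exp (C * F x) :=
      mul_nonneg (mul_nonneg hx.1 hΘ₀.le) (Real.exp_pos _).le
    have h4 : (Ω₀ + x * Θ₀ * Real.exp (C * F x)) * (1 + C * F x)
        ≤ (2 * Ω₀) * (1 + C * F x) :=
      mul_le_mul_of_nonneg_right (by linarith) hpos
    nlinarith
  -- Grönwall
  have hgron := norm_le_gronwallBound_of_norm_deriv_right_le
    (f := F) (f' := Ωe) (δ := 0) (K := 2 * C * Ω₀) (ε := 2 * Ω₀) (a := 0) (b := T)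
    hFcont.continuousOn (fun x _ => (hFderiv x).hasDerivWithinAt)
    (by simp [hF_def])
    (by
      intro x hx
      have hx' : x ∈ Set.Icc (0:ℝ) T := ⟨hx.1, hx.2.le⟩
      rw [Real.norm_of_nonneg (hΩe_nn x), Real.norm_of_nonneg (hFnn x hx.1), hΩe_eq x hx']
      linarith [hkey x hx'])
  intro t ht
  have hFt := hgron t ht
  rw [Real.norm_of_nonneg (hFnn t ht.1), sub_zero,
    gronwallBound_of_K_ne_0 (by positivity : (2:ℝ) * C * Ω₀ ≠ 0)] at hFt
  simp only [zero_mul, zero_add] at hFt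
  have h2 := hkey t ht
  have hK : (0:ℝ) < 2 * C * Ω₀ := by positivity
  have hdiv : (2 * Ω₀) / (2 * C * Ω₀) = 1 / C := by
    field_simp
  rw [hdiv] at hFt
  have hexp : Real.exp (2 * C * Ω₀ * t) = Real.exp (2 * C * t * Ω₀) := by ring_nf
  rw [hexp] at hFt
  have h5 : 2 * C * Ω₀ * F t ≤ 2 * C * Ω₀ * (1 / C * (Real.exp (2 * C * t * Ω₀) - 1)) :=
    mul_le_mul_of_nonneg_left hFt (by positivity)
  have h6 : 2 * C * Ω₀ * (1 / C * (Real.exp (2 * C * t * Ω₀) - 1))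
      = 2 * Ω₀ * (Real.exp (2 * C * t * Ω₀) - 1) := by
    field_simp
  linarith
end

section
/- Let F : [0,T) → [1,∞) be continuous and satisfy F(t) ≤ F(0) + C∫₀ᵗ g(τ)·F(τ)·log(e + F(τ)) dτ, where g ≥ 0 is continuous with ∫₀ᵀ g dτ < ∞ and C > 0. Then F is bounded on [0,T); in fact log(e + F(t)) ≤ log(e + F(0))·exp(2C∫₀ᵗ g dτ) for all t ∈ [0,T). -/
open MeasureTheory intervalIntegral

theorem stmt_13 (T C : ℝ) (hT : 0 < T) (hC : 0 < C)
    (F g : ℝ → ℝ)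
    (hF : ContinuousOn F (Set.Ico 0 T)) (hF1 : ∀ t ∈ Set.Ico (0:ℝ) T, 1 ≤ F t)
    (hg : ContinuousOn g (Set.Ico 0 T)) (hgnn : ∀ t ∈ Set.Ico (0:ℝ) T, 0 ≤ g t)
    (hgint : IntegrableOn g (Set.Ico 0 T))
    (hineq : ∀ t ∈ Set.Ico (0:ℝ) T,
      F t ≤ F 0 + C * ∫ τ in (0:ℝ)..t,
        g τ * F τ * Real.log (Real.exp 1 + F τ)) :
    ∀ t ∈ Set.Ico (0:ℝ) T,
      Real.log (Real.exp 1 + F t)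
        ≤ Real.log (Real.exp 1 + F 0) * Real.exp (2 * C * ∫ τ in (0:ℝ)..t, g τ) := by
  intro t₀ ht₀
  obtain ⟨ht₀0, ht₀T⟩ := ht₀
  -- notation
  set f1 : ℝ → ℝ := fun τ => g τ * F τ * Real.log (Real.exp 1 + F τ) with hf1def
  set h : ℝ → ℝ := fun t => F 0 + C * ∫ τ in (0:ℝ)..t, f1 τ with hhdef
  set G : ℝ → ℝ := fun t => ∫ τ in (0:ℝ)..t, g τ with hGdef
  have h0T : (0:ℝ) ∈ Set.Ico (0:ℝ) T := ⟨le_refl _, hT⟩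
  have hF00 : (0:ℝ) ≤ F 0 := le_trans zero_le_one (hF1 0 h0T)
  -- continuity of f1 on Ico 0 T
  have hlogF : ContinuousOn (fun τ => Real.log (Real.exp 1 + F τ)) (Set.Ico 0 T) := by
    apply ContinuousOn.log (continuousOn_const.add hF)
    intro x hx
    have := hF1 x hx
    exact ne_of_gt (show (0:ℝ) < Real.exp 1 + F x by linarith [Real.exp_pos 1])
  have hf1cont : ContinuousOn f1 (Set.Ico 0 T) := (hg.mul hF).mul hlogF
  have hf1nn : ∀ x ∈ Set.Ico (0:ℝ) T, 0 ≤ f1 x := by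
    intro x hx
    have h1 := hF1 x hx
    have h2 := hgnn x hx
    have h3 : (1:ℝ) ≤ Real.log (Real.exp 1 + F x) := by
      rw [Real.le_log_iff_exp_le (by positivity)]
      linarith
    have : 0 ≤ F x := by linarith
    simp only [hf1def]
    positivity
  -- case t₀ = 0
  rcases eq_or_lt_of_le ht₀0 with rfl | ht₀pos
  · have h1 : (1:ℝ) ≤ Real.log (Real.exp 1 + F 0) := by
      rw [Real.le_log_iff_exp_le (by positivity)]
      linarith
    simp only [intervalIntegral.integral_same, mul_zero, Real.exp_zero, mul_one]
    linarith
  have hsub : Set.Icc (0:ℝ) t₀ ⊆ Set.Ico 0 T := fun x hx => ⟨hx.1, lt_of_le_of_lt hx.2 ht₀T⟩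
  have hsubIoo : Set.Ioo (0:ℝ) t₀ ⊆ Set.Ioo 0 T := Set.Ioo_subset_Ioo le_rfl (le_of_lt ht₀T)
  have hIoosub : Set.Ioo (0:ℝ) T ⊆ Set.Ico 0 T := Set.Ioo_subset_Ico_self
  -- interval integrability on subintervals
  have hf1int : ∀ s ∈ Set.Icc (0:ℝ) t₀, IntervalIntegrable f1 volume 0 s := by
    intro s hs
    apply ContinuousOn.intervalIntegrable
    rw [Set.uIcc_of_le hs.1]
    exact hf1cont.mono (fun x hx => hsub ⟨hx.1, le_trans hx.2 hs.2⟩)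
  have hgintI : ∀ s ∈ Set.Icc (0:ℝ) t₀, IntervalIntegrable g volume 0 s := by
    intro s hs
    apply ContinuousOn.intervalIntegrable
    rw [Set.uIcc_of_le hs.1]
    exact hg.mono (fun x hx => hsub ⟨hx.1, le_trans hx.2 hs.2⟩)
  -- basic bounds
  have hFh : ∀ s ∈ Set.Icc (0:ℝ) t₀, F s ≤ h s := fun s hs => hineq s (hsub hs)
  have hh1 : ∀ s ∈ Set.Icc (0:ℝ) t₀, 1 ≤ h s := fun s hs =>
    le_trans (hF1 s (hsub hs)) (hFh s hs)
  have hehpos : ∀ s ∈ Set.Icc (0:ℝ) t₀, 0 < Real.exp 1 + h s := by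
    intro s hs
    have := hh1 s hs
    have := Real.exp_pos 1
    linarith
  have hlogh1 : ∀ s ∈ Set.Icc (0:ℝ) t₀, 1 ≤ Real.log (Real.exp 1 + h s) := by
    intro s hs
    have h1 := hh1 s hs
    rw [Real.le_log_iff_exp_le (by linarith [Real.exp_pos 1])]
    linarith
  -- derivatives on the interior
  have hDeriv : ∀ x ∈ Set.Ioo (0:ℝ) t₀,
      HasDerivAt h (C * f1 x) x ∧ HasDerivAt G (g x) x := by
    intro x hx
    have hxT : x ∈ Set.Ioo (0:ℝ) T := hsubIoo hx
    have hxIcc : x ∈ Set.Icc (0:ℝ) t₀ := Set.Ioo_subset_Icc_self hx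
    have hmem : Set.Ioo (0:ℝ) T ∈ nhds x := (isOpen_Ioo).mem_nhds hxT
    have hf1ca : ContinuousAt f1 x :=
      (hf1cont.mono hIoosub).continuousAt hmem
    have hgca : ContinuousAt g x :=
      (hg.mono hIoosub).continuousAt hmem
    have hf1m : StronglyMeasurableAtFilter f1 (nhds x) MeasureTheory.volume :=
      (hf1cont.mono hIoosub).stronglyMeasurableAtFilter isOpen_Ioo x hxT
    have hgm : StronglyMeasurableAtFilter g (nhds x) MeasureTheory.volume :=
      (hg.mono hIoosub).stronglyMeasurableAtFilter isOpen_Ioo x hxT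
    constructor
    · have := (intervalIntegral.integral_hasDerivAt_right (hf1int x hxIcc) hf1m hf1ca).const_mul C
      exact this.const_add (F 0)
    · exact intervalIntegral.integral_hasDerivAt_right (hgintI x hxIcc) hgm hgca
  -- the comparison function
  set φ : ℝ → ℝ := fun t => Real.log (Real.exp 1 + h t) * Real.exp (-(C * G t)) with hφdef
  have hφDeriv : ∀ x ∈ Set.Ioo (0:ℝ) t₀,
      HasDerivAt φ ((C * f1 x) / (Real.exp 1 + h x) * Real.exp (-(C * G x))
        + Real.log (Real.exp 1 + h x) * (Real.exp (-(C * G x)) * (-(C * g x)))) x := by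
    intro x hx
    obtain ⟨hh', hG'⟩ := hDeriv x hx
    have hxIcc : x ∈ Set.Icc (0:ℝ) t₀ := Set.Ioo_subset_Icc_self hx
    have hne : Real.exp 1 + h x ≠ 0 := ne_of_gt (hehpos x hxIcc)
    have hlog' : HasDerivAt (fun t => Real.log (Real.exp 1 + h t))
        ((C * f1 x) / (Real.exp 1 + h x)) x := by
      have := (hh'.const_add (Real.exp 1)).log hne
      simpa using this
    have hexp' : HasDerivAt (fun t => Real.exp (-(C * G t)))
        (Real.exp (-(C * G x)) * (-(C * g x))) x := by
      have := ((hG'.const_mul C).neg).exp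
      simpa [mul_comm] using this
    exact hlog'.mul hexp'
  -- the derivative is nonpositive
  have hφderiv_nonpos : ∀ x ∈ Set.Ioo (0:ℝ) t₀, deriv φ x ≤ 0 := by
    intro x hx
    rw [(hφDeriv x hx).deriv]
    have hxIcc : x ∈ Set.Icc (0:ℝ) t₀ := Set.Ioo_subset_Icc_self hx
    have hxI : x ∈ Set.Ico (0:ℝ) T := hsub hxIcc
    have hgx : 0 ≤ g x := hgnn x hxI
    have hFx : 1 ≤ F x := hF1 x hxI
    have hFhx : F x ≤ h x := hFh x hxIcc
    have hD : 0 < Real.exp 1 + h x := hehpos x hxIcc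
    have hL : 1 ≤ Real.log (Real.exp 1 + h x) := hlogh1 x hxIcc
    have hE : 0 < Real.exp (-(C * G x)) := Real.exp_pos _
    have hlogle : Real.log (Real.exp 1 + F x) ≤ Real.log (Real.exp 1 + h x) := by
      apply Real.log_le_log (by positivity)
      linarith
    have hlogFnn : 0 ≤ Real.log (Real.exp 1 + F x) := by
      apply Real.log_nonneg
      nlinarith [Real.add_one_le_exp (1:ℝ)]
    have hf1le : f1 x ≤ g x * (Real.exp 1 + h x) * Real.log (Real.exp 1 + h x) := by
      simp only [hf1def]
      have h1 : F x ≤ Real.exp 1 + h x := by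
        nlinarith [Real.exp_pos 1]
      have h2 : g x * F x ≤ g x * (Real.exp 1 + h x) := by
        apply mul_le_mul_of_nonneg_left h1 hgx
      apply mul_le_mul h2 hlogle hlogFnn
      positivity
    have key : (C * f1 x) / (Real.exp 1 + h x) ≤ C * g x * Real.log (Real.exp 1 + h x) := by
      rw [div_le_iff₀ hD]
      have : C * f1 x ≤ C * (g x * (Real.exp 1 + h x) * Real.log (Real.exp 1 + h x)) :=
        mul_le_mul_of_nonneg_left hf1le (le_of_lt hC)
      nlinarith
    nlinarith [mul_le_mul_of_nonneg_right key (le_of_lt hE)]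
  -- continuity of φ on Icc 0 t₀
  have hhcont : ContinuousOn h (Set.Icc 0 t₀) := by
    apply continuousOn_const.add (continuousOn_const.mul _)
    have : IntegrableOn f1 (Set.uIcc (0:ℝ) t₀) volume := by
      rw [Set.uIcc_of_le (le_of_lt ht₀pos)]
      exact ((hf1cont.mono hsub).integrableOn_compact isCompact_Icc)
    have := intervalIntegral.continuousOn_primitive_interval this
    rwa [Set.uIcc_of_le (le_of_lt ht₀pos)] at this
  have hGcont : ContinuousOn G (Set.Icc 0 t₀) := by
    have : IntegrableOn g (Set.uIcc (0:ℝ) t₀) volume := by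
      rw [Set.uIcc_of_le (le_of_lt ht₀pos)]
      exact ((hg.mono hsub).integrableOn_compact isCompact_Icc)
    have := intervalIntegral.continuousOn_primitive_interval this
    rwa [Set.uIcc_of_le (le_of_lt ht₀pos)] at this
  have hφcont : ContinuousOn φ (Set.Icc 0 t₀) := by
    apply ContinuousOn.mul
    · apply ContinuousOn.log (continuousOn_const.add hhcont)
      intro x hx; exact ne_of_gt (hehpos x hx)
    · exact ContinuousOn.rexp (ContinuousOn.neg (continuousOn_const.mul hGcont))
  -- φ is antitone
  have hφdiff : DifferentiableOn ℝ φ (interior (Set.Icc (0:ℝ) t₀)) := by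
    rw [interior_Icc]
    intro x hx
    exact ((hφDeriv x hx).differentiableAt).differentiableWithinAt
  have hanti : AntitoneOn φ (Set.Icc (0:ℝ) t₀) := by
    apply antitoneOn_of_deriv_nonpos (convex_Icc 0 t₀) hφcont hφdiff
    intro x hx
    rw [interior_Icc] at hx
    exact hφderiv_nonpos x hx
  have hmono := hanti (Set.left_mem_Icc.mpr (le_of_lt ht₀pos))
    (Set.right_mem_Icc.mpr (le_of_lt ht₀pos)) (le_of_lt ht₀pos)
  -- unfold φ 0
  have hφ0 : φ 0 = Real.log (Real.exp 1 + F 0) := by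
    simp [hφdef, hhdef, hGdef, intervalIntegral.integral_same]
  rw [hφ0] at hmono
  -- from φ t₀ ≤ log (e + F 0) deduce the bound
  have hGnn : 0 ≤ G t₀ := by
    apply intervalIntegral.integral_nonneg (le_of_lt ht₀pos)
    intro u hu; exact hgnn u (hsub hu)
  have hlogF0 : 1 ≤ Real.log (Real.exp 1 + F 0) := by
    rw [Real.le_log_iff_exp_le (by linarith [Real.exp_pos 1])]
    linarith
  have ht₀Icc : t₀ ∈ Set.Icc (0:ℝ) t₀ := Set.right_mem_Icc.mpr (le_of_lt ht₀pos)
  have step1 : Real.log (Real.exp 1 + h t₀)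
      ≤ Real.log (Real.exp 1 + F 0) * Real.exp (C * G t₀) := by
    have hEpos : 0 < Real.exp (-(C * G t₀)) := Real.exp_pos _
    have := mul_le_mul_of_nonneg_right hmono (le_of_lt (Real.exp_pos (C * G t₀)))
    calc Real.log (Real.exp 1 + h t₀)
        = Real.log (Real.exp 1 + h t₀) * Real.exp (-(C * G t₀)) * Real.exp (C * G t₀) := by
          rw [mul_assoc, ← Real.exp_add]; simp
      _ ≤ _ := this
  have step2 : Real.log (Real.exp 1 + F t₀) ≤ Real.log (Real.exp 1 + h t₀) := by
    apply Real.log_le_log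
    · have := hF1 t₀ ⟨ht₀0, ht₀T⟩
      have := Real.exp_pos 1
      linarith
    · linarith [hFh t₀ ht₀Icc]
  have step3 : Real.exp (C * G t₀) ≤ Real.exp (2 * C * G t₀) := by
    apply Real.exp_le_exp.mpr
    nlinarith
  calc Real.log (Real.exp 1 + F t₀) ≤ Real.log (Real.exp 1 + F 0) * Real.exp (C * G t₀) :=
      le_trans step2 step1
    _ ≤ Real.log (Real.exp 1 + F 0) * Real.exp (2 * C * G t₀) := by
      apply mul_le_mul_of_nonneg_left step3 (by linarith)
end
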